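/- arXiv:1706.05279 — 2 statements merged into one kernel-verified Lean document; each statement's English description precedes it below -/
import Mathlib

section
/- For a rooted binary phylogenetic network N on X and any subset S ⊆ X, the phylogenetic net diversity PND(S) is at most the minimum, over all phylogenetic X-trees T displayed by N, of the phylogenetic diversity PD_T(S). -/
open Finset
open scoped Classical

/-- `IsPath E u v p` : `p` is a list of consecutive edges of `E` leading from `u` to `v`. -/
def IsPath {V : Type*} (E : Finset (V × V)) : V → V → List (V × V) → Prop
  | u, v, [] => u = v
  | u, v, e :: p => e ∈ E ∧ e.1 = u ∧ IsPath E e.2 v p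

/-- The vertex `u` lies on the path `p` starting at the vertex `a`. -/
def MemPath {V : Type*} (u a : V) (p : List (V × V)) : Prop :=
  u = a ∨ ∃ e ∈ p, e.2 = u

/-- indegree of a vertex. -/
def inDeg {V : Type*} [DecidableEq V] (E : Finset (V × V)) (v : V) : ℕ :=
  (E.filter fun e => e.2 = v).card

/-- outdegree of a vertex. -/
def outDeg {V : Type*} [DecidableEq V] (E : Finset (V × V)) (v : V) : ℕ :=
  (E.filter fun e => e.1 = v).card

/-- All lists of length `n` with entries in `s`. -/
def listsOf {V : Type*} [DecidableEq V] (s : Finset (V × V)) : ℕ → Finset (List (V × V))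
  | 0 => {[]}
  | n + 1 => s.biUnion fun e => (listsOf s n).image (e :: ·)

/-- The (finite) set of all directed paths from `u` to `v` in an acyclic digraph. -/
noncomputable def allPaths {V : Type*} [Fintype V] [DecidableEq V]
    (E : Finset (V × V)) (u v : V) : Finset (List (V × V)) :=
  ((Finset.range (Fintype.card V + 1)).biUnion (listsOf E)).filter (IsPath E u v)

/-- A rooted binary phylogenetic network on the taxon set `X`, with vertex set `V`,
edge lengths and inheritance probabilities. -/
structure PhyloNetwork (V X : Type*) [Fintype V] [DecidableEq V] [Fintype X] where
  E : Finset (V × V)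
  root : V
  len : V × V → ℝ
  prob : V × V → ℝ
  leafOf : X → V
  leafOf_inj : Function.Injective leafOf
  root_in : inDeg E root = 0
  root_out : outDeg E root = 2
  leaf_iff : ∀ v, outDeg E v = 0 ↔ ∃ x, leafOf x = v
  leaf_in : ∀ x, inDeg E (leafOf x) = 1
  internal : ∀ v, v ≠ root → outDeg E v ≠ 0 →
      (inDeg E v = 1 ∧ outDeg E v = 2) ∨ (inDeg E v = 2 ∧ outDeg E v = 1)
  reach : ∀ v, ∃ p, IsPath E root v p
  acyclic : ∀ (v : V) (p : List (V × V)), p ≠ [] → ¬ IsPath E v v p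
  len_nonneg : ∀ e ∈ E, 0 ≤ len e
  len_pos_tree : ∀ e ∈ E, inDeg E e.2 ≤ 1 → 0 < len e
  len_retic : ∀ e ∈ E, inDeg E e.2 = 2 → len e = 0
  prob_tree : ∀ e ∈ E, inDeg E e.2 ≤ 1 → prob e = 1
  prob_pos : ∀ e ∈ E, 0 < prob e
  prob_lt_one : ∀ e ∈ E, inDeg E e.2 = 2 → prob e < 1
  prob_sum : ∀ v, inDeg E v = 2 → ∑ e ∈ E.filter (fun e => e.2 = v), prob e = 1

namespace PhyloNetwork

variable {V X : Type*} [Fintype V] [DecidableEq V] [Fintype X] [DecidableEq X]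
variable (N : PhyloNetwork V X)

/-- Probability of a directed path: the product of the probabilities of its edges. -/
noncomputable def pathProb (p : List (V × V)) : ℝ := (p.map N.prob).prod

/-- Total weight (sum of branch lengths) of a set of edges. -/
noncomputable def weight (A : Finset (V × V)) : ℝ := ∑ e ∈ A, N.len e

/-- A switching keeps exactly one incoming edge of every non-root vertex, i.e. it
deletes exactly one of the two incoming reticulation edges of each reticulation node
and keeps all tree edges. -/
def IsSwitching (F : Finset (V × V)) : Prop :=
  F ⊆ N.E ∧ ∀ v, v ≠ N.root → (F.filter fun e => e.2 = v).card = 1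

/-- The switching yields a phylogenetic `X`-tree: every dead end is a labeled leaf. -/
def IsValidSwitching (F : Finset (V × V)) : Prop :=
  N.IsSwitching F ∧ ∀ v, outDeg F v = 0 → ∃ x, N.leafOf x = v

/-- The (multi)set `T(N)` of phylogenetic `X`-trees displayed by `N`, each tree being
encoded by the switching producing it. -/
noncomputable def displayed : Finset (Finset (V × V)) :=
  N.E.powerset.filter N.IsValidSwitching

/-- The set of leaves lying below the edge `e` inside the subgraph `F`. -/
noncomputable def clusterIn (F : Finset (V × V)) (e : V × V) : Finset X :=
  Finset.univ.filter fun x => ∃ p, IsPath F e.2 (N.leafOf x) p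

/-- Phylogenetic diversity of `S` in the tree displayed by the switching `F`
(the sum of the lengths of the edges of the minimal subtree spanning `S` and the root;
suppression of degree-two vertices merges edge lengths additively, so it is computed
on the unsuppressed switching). -/
noncomputable def PDdisp (F : Finset (V × V)) (S : Finset X) : ℝ :=
  ∑ e ∈ F.filter (fun e => (N.clusterIn F e ∩ S).Nonempty), N.len e

/-- Unscaled probability of the tree displayed by the switching `F`: the product of the
inheritance probabilities of the kept reticulation edges. -/
noncomputable def Punsc (F : Finset (V × V)) : ℝ :=
  ∏ e ∈ F.filter (fun e => inDeg N.E e.2 = 2), N.prob e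

/-- `v` is a vertex of the edge set `A`. -/
def vertexOf (A : Finset (V × V)) (v : V) : Prop := ∃ e ∈ A, e.1 = v ∨ e.2 = v

/-- `A` is an arborescence rooted at the root of `N` inside `N`: there is exactly one
directed path from the root to each of its vertices. -/
def IsArbor (A : Finset (V × V)) : Prop :=
  A ⊆ N.E ∧ ∀ v, vertexOf A v → (allPaths A N.root v).card = 1

/-- `A` contains all taxa of `S`. -/
def spans (A : Finset (V × V)) (S : Finset X) : Prop :=
  ∀ x ∈ S, vertexOf A (N.leafOf x)

/-- Phylogenetic net diversity: the weight of a minimum cost arborescence containing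
`S` and the root. -/
noncomputable def PND (S : Finset X) : ℝ :=
  sInf {w : ℝ | ∃ A, N.IsArbor A ∧ N.spans A S ∧ w = N.weight A}

/-- Phylogenetic subnet diversity: the total weight of the subgraph of `N` consisting of
all edges lying on some directed path from the root to a leaf of `S`. -/
noncomputable def PSD (S : Finset X) : ℝ :=
  ∑ e ∈ N.E.filter (fun e => ∃ x ∈ S, ∃ p, IsPath N.E N.root (N.leafOf x) p ∧ e ∈ p), N.len e

/-- Probability that the leaf `d` is a descendant of the node `v`: the sum of the
probabilities of all directed paths from `v` to `d`. -/
noncomputable def Pdesc (v : V) (d : X) : ℝ :=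
  ∑ p ∈ allPaths N.E v (N.leafOf d), N.pathProb p

/-- The set of leaves that are descendants of the edge `e`. -/
noncomputable def De (e : V × V) : Finset X :=
  Finset.univ.filter fun x => ∃ p, IsPath N.E e.2 (N.leafOf x) p

/-- Net Fair Proportion Index of the taxon `a`. -/
noncomputable def NFP (a : X) : ℝ :=
  ∑ p ∈ allPaths N.E N.root (N.leafOf a),
    N.pathProb p * (p.map (fun e => N.len e / ∑ d ∈ N.De e, N.Pdesc e.2 d)).sum

end PhyloNetwork

/-- The original Shapley Value of a set function `f` (with `f ∅ = 0`). -/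
noncomputable def shapley {X : Type*} [Fintype X] [DecidableEq X]
    (f : Finset X → ℝ) (a : X) : ℝ :=
  (1 / (Nat.factorial (Fintype.card X) : ℝ)) *
    ∑ S ∈ Finset.univ.powerset.filter (fun S : Finset X => a ∈ S),
      ((S.card - 1).factorial : ℝ) * ((Fintype.card X - S.card).factorial : ℝ) *
        (f S - f (S.erase a))

section lemmas
variable {V : Type*}

@[simp] lemma isPath_nil {E : Finset (V × V)} {u v : V} : IsPath E u v [] ↔ u = v := Iff.rfl

@[simp] lemma isPath_cons {E : Finset (V × V)} {u v : V} {e : V × V} {p : List (V × V)} :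
    IsPath E u v (e :: p) ↔ e ∈ E ∧ e.1 = u ∧ IsPath E e.2 v p := Iff.rfl

lemma isPath_mem {E : Finset (V × V)} :
    ∀ {u v : V} {p : List (V × V)}, IsPath E u v p → ∀ e ∈ p, e ∈ E
  | _, _, [], _, e, he => by simp at he
  | u, v, f :: p, h, e, he => by
    rcases List.mem_cons.1 he with rfl | he
    · exact h.1
    · exact isPath_mem h.2.2 e he

lemma isPath_restrict {E A : Finset (V × V)} :
    ∀ {u v : V} {p : List (V × V)}, IsPath E u v p → (∀ e ∈ p, e ∈ A) → IsPath A u v p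
  | u, v, [], h, _ => h
  | u, v, e :: p, h, hA =>
    ⟨hA e (List.mem_cons_self), h.2.1,
      isPath_restrict h.2.2 fun f hf => hA f (List.mem_cons_of_mem _ hf)⟩

lemma isPath_append {E : Finset (V × V)} :
    ∀ {u v w : V} {p q : List (V × V)}, IsPath E u v p → IsPath E v w q → IsPath E u w (p ++ q)
  | u, v, w, [], q, h, h' => by rwa [isPath_nil.1 h]
  | u, v, w, e :: p, q, h, h' => ⟨h.1, h.2.1, isPath_append h.2.2 h'⟩

lemma isPath_append_iff {E : Finset (V × V)} :
    ∀ {u w : V} {p q : List (V × V)},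
      IsPath E u w (p ++ q) ↔ ∃ v, IsPath E u v p ∧ IsPath E v w q
  | u, w, [], q => by simp
  | u, w, e :: p, q => by
    simp only [List.cons_append, isPath_cons, isPath_append_iff, and_assoc]
    tauto

variable [Fintype V] [DecidableEq V]

lemma mem_listsOf {s : Finset (V × V)} :
    ∀ {n : ℕ} {p : List (V × V)}, p ∈ listsOf s n ↔ p.length = n ∧ ∀ e ∈ p, e ∈ s
  | 0, p => by
    simp only [listsOf, Finset.mem_singleton]
    constructor
    · rintro rfl; simp
    · rintro ⟨hl, -⟩; exact List.length_eq_zero_iff.1 hl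
  | n + 1, p => by
    simp only [listsOf, Finset.mem_biUnion, Finset.mem_image]
    constructor
    · rintro ⟨e, he, q, hq, rfl⟩
      obtain ⟨hl, hm⟩ := mem_listsOf.1 hq
      refine ⟨by simp [hl], ?_⟩
      intro f hf
      rcases List.mem_cons.1 hf with rfl | hf
      · exact he
      · exact hm f hf
    · rintro ⟨hl, hm⟩
      cases p with
      | nil => simp at hl
      | cons e q =>
        refine ⟨e, hm e (List.mem_cons_self), q, mem_listsOf.2 ⟨by simpa using hl,
          fun f hf => hm f (List.mem_cons_of_mem _ hf)⟩, rfl⟩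

lemma mem_allPaths {E : Finset (V × V)} {u v : V} {p : List (V × V)} :
    p ∈ allPaths E u v ↔ IsPath E u v p ∧ p.length ≤ Fintype.card V := by
  simp only [allPaths, Finset.mem_filter, Finset.mem_biUnion, Finset.mem_range]
  constructor
  · rintro ⟨⟨n, hn, hp⟩, h⟩
    have := (mem_listsOf.1 hp).1
    exact ⟨h, by omega⟩
  · rintro ⟨h, hl⟩
    exact ⟨⟨p.length, by omega, mem_listsOf.2 ⟨rfl, isPath_mem h⟩⟩, h⟩

end lemmas
section lemmas2
variable {V : Type*} [Fintype V] [DecidableEq V]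

/-- in an acyclic graph the start vertex does not reappear along a path. -/
lemma isPath_nodup {E : Finset (V × V)} (hac : ∀ (v : V) (p : List (V × V)), p ≠ [] → ¬ IsPath E v v p) :
    ∀ {u v : V} {p : List (V × V)}, IsPath E u v p → (u :: p.map Prod.snd).Nodup
  | u, v, [], _ => List.nodup_singleton u
  | u, v, e :: p, h => by
    have ih := isPath_nodup hac h.2.2
    have hmem : u ∉ ((e :: p).map Prod.snd) := by
      intro hu
      obtain ⟨f, hf, hfu⟩ := List.mem_map.1 hu
      obtain ⟨s, t, hst⟩ := List.append_of_mem hf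
      have hsp : IsPath E u v ((s ++ [f]) ++ t) := by
        rw [List.append_assoc]; simpa [hst] using h
      obtain ⟨w, hw1, hw2⟩ := isPath_append_iff.1 hsp
      obtain ⟨w', hw'1, hw'2⟩ := isPath_append_iff.1 hw1
      have : w = u := by
        have := hw'2.2.2
        simp only [isPath_nil] at this
        rw [← this, hfu]
      exact hac u (s ++ [f]) (by simp) (this ▸ hw1)
    have : (e :: p).map Prod.snd = e.2 :: p.map Prod.snd := rfl
    exact List.nodup_cons.2 ⟨hmem, this ▸ ih⟩

lemma isPath_length_le {E : Finset (V × V)}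
    (hac : ∀ (v : V) (p : List (V × V)), p ≠ [] → ¬ IsPath E v v p)
    {u v : V} {p : List (V × V)} (h : IsPath E u v p) : p.length ≤ Fintype.card V := by
  have := (isPath_nodup hac h).length_le_card
  simp only [List.length_cons, List.length_map] at this
  omega

/-- last edge decomposition -/
lemma isPath_concat_iff {E : Finset (V × V)} {u v : V} {p : List (V × V)} {e : V × V} :
    IsPath E u v (p ++ [e]) ↔ IsPath E u e.1 p ∧ e ∈ E ∧ e.2 = v := by
  rw [isPath_append_iff]
  constructor
  · rintro ⟨w, h1, h2⟩
    obtain ⟨he, h1e, h2e⟩ := isPath_cons.1 h2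
    simp only [isPath_nil] at h2e
    exact ⟨h1e ▸ h1, he, h2e⟩
  · rintro ⟨h1, he, rfl⟩
    exact ⟨e.1, h1, he, rfl, rfl⟩

lemma path_unique {E : Finset (V × V)} {r : V}
    (hac : ∀ (v : V) (p : List (V × V)), p ≠ [] → ¬ IsPath E v v p)
    (hdeg : ∀ v, v ≠ r → (E.filter fun e => e.2 = v).card ≤ 1) :
    ∀ n {v : V} {p q : List (V × V)}, p.length ≤ n →
      IsPath E r v p → IsPath E r v q → p = q := by
  intro n
  induction n with
  | zero =>
    intro v p q hl hp hq
    have hp0 : p = [] := List.length_eq_zero_iff.1 (Nat.le_zero.1 hl)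
    subst hp0
    have hrv : r = v := hp
    subst hrv
    rcases List.eq_nil_or_concat q with rfl | ⟨L, b, rfl⟩
    · rfl
    · exact absurd hq (hac r _ (by simp))
  | succ n ih =>
    intro v p q hl hp hq
    by_cases hv : v = r
    · subst hv
      have hp0 : p = [] := by
        by_contra h; exact hac v p h hp
      have hq0 : q = [] := by
        by_contra h; exact hac v q h hq
      rw [hp0, hq0]
    · have hpne : p ≠ [] := by rintro rfl; exact hv hp.symm
      have hqne : q ≠ [] := by rintro rfl; exact hv hq.symm
      obtain rfl | ⟨p', e, rfl⟩ := List.eq_nil_or_concat p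
      · exact absurd rfl hpne
      obtain rfl | ⟨q', f, rfl⟩ := List.eq_nil_or_concat q
      · exact absurd rfl hqne
      rw [List.concat_eq_append] at hp hl ⊢
      rw [List.concat_eq_append] at hq ⊢
      obtain ⟨hp1, hpe, hpe2⟩ := isPath_concat_iff.1 hp
      obtain ⟨hq1, hqe, hqe2⟩ := isPath_concat_iff.1 hq
      have hef : e = f := by
        have h1 : e ∈ E.filter fun e => e.2 = v := Finset.mem_filter.2 ⟨hpe, hpe2⟩
        have h2 : f ∈ E.filter fun e => e.2 = v := Finset.mem_filter.2 ⟨hqe, hqe2⟩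
        exact Finset.card_le_one.1 (hdeg v hv) _ h1 _ h2
      subst hef
      have : p' = q' := ih (by simp at hl; omega) hp1 hq1
      rw [this]

lemma path_exists {E : Finset (V × V)} {r : V}
    (hac : ∀ (v : V) (p : List (V × V)), p ≠ [] → ¬ IsPath E v v p)
    (hdeg : ∀ v, v ≠ r → 0 < (E.filter fun e => e.2 = v).card) (v : V) :
    ∃ p, IsPath E r v p := by
  have key : ∀ n (v : V), (∃ p, IsPath E r v p) ∨ ∃ w p, p.length = n ∧ IsPath E w v p := by
    intro n
    induction n with
    | zero => intro v; exact Or.inr ⟨v, [], rfl, rfl⟩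
    | succ n ih =>
      intro v
      by_cases hv : v = r
      · exact Or.inl ⟨[], hv.symm⟩
      · obtain ⟨e, he⟩ := Finset.card_pos.1 (hdeg v hv)
        obtain ⟨heE, he2⟩ := Finset.mem_filter.1 he
        rcases ih e.1 with ⟨p, hp⟩ | ⟨w, p, hl, hp⟩
        · exact Or.inl ⟨p ++ [e], isPath_concat_iff.2 ⟨hp, heE, he2⟩⟩
        · exact Or.inr ⟨w, p ++ [e], by simp [hl],
            isPath_concat_iff.2 ⟨hp, heE, he2⟩⟩
  rcases key (Fintype.card V + 1) v with h | ⟨w, p, hl, hp⟩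
  · exact h
  · have := isPath_length_le hac hp
    omega

end lemmas2


/-- the phylogenetic net diversity of `S` is at most the minimum, over all
phylogenetic `X`-trees displayed by `N`, of the phylogenetic diversity of `S`. -/
theorem PND_le_min_embedded_PD {V X : Type*} [Fintype V] [DecidableEq V] [Fintype X] [DecidableEq X] (N : PhyloNetwork V X) (S : Finset X)
    (hne : N.displayed.Nonempty) :
    N.PND S ≤ N.displayed.inf' hne (fun F => N.PDdisp F S) := by
  obtain ⟨F, hF, hFeq⟩ := Finset.exists_mem_eq_inf' hne (fun F => N.PDdisp F S)
  rw [hFeq]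
  simp only [PhyloNetwork.displayed, Finset.mem_filter, Finset.mem_powerset] at hF
  obtain ⟨hFE, ⟨⟨hFsub, hFdeg⟩, _⟩⟩ := hF
  set A := F.filter (fun e => (N.clusterIn F e ∩ S).Nonempty) with hA
  have hAF : A ⊆ F := Finset.filter_subset _ _
  have hAE : A ⊆ N.E := hAF.trans hFsub
  have hacF : ∀ (v : V) (p : List (V × V)), p ≠ [] → ¬ IsPath F v v p := fun v p hp h =>
    N.acyclic v p hp (isPath_restrict h fun e he => hFsub (isPath_mem h e he))
  have hacA : ∀ (v : V) (p : List (V × V)), p ≠ [] → ¬ IsPath A v v p := fun v p hp h =>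
    hacF v p hp (isPath_restrict h fun e he => hAF (isPath_mem h e he))
  have hdegA : ∀ v, v ≠ N.root → (A.filter fun e => e.2 = v).card ≤ 1 := fun v hv =>
    le_trans (Finset.card_le_card (Finset.filter_subset_filter _ hAF)) (le_of_eq (hFdeg v hv))
  -- every edge on an F-path from the root to the head of an A-edge is itself in A
  have key : ∀ e ∈ A, ∀ p, IsPath F N.root e.2 p → ∀ f ∈ p, f ∈ A := by
    intro e heA p hp f hf
    obtain ⟨heF, x, hx⟩ := Finset.mem_filter.1 heA
    obtain ⟨hxc, hxS⟩ := Finset.mem_inter.1 hx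
    obtain ⟨-, r, hr⟩ := Finset.mem_filter.1 hxc
    obtain ⟨s, t, rfl⟩ := List.append_of_mem hf
    obtain ⟨w, hw1, hw2⟩ := isPath_append_iff.1 hp
    obtain ⟨hfF, hf1, hf2⟩ := isPath_cons.1 hw2
    refine Finset.mem_filter.2 ⟨hfF, x, Finset.mem_inter.2 ⟨?_, hxS⟩⟩
    exact Finset.mem_filter.2 ⟨Finset.mem_univ x, t ++ r, isPath_append hf2 hr⟩
  -- existence of A-paths from the root to each vertex of A
  have hexF : ∀ v, ∃ p, IsPath F N.root v p :=
    path_exists hacF fun v hv => (hFdeg v hv) ▸ Nat.one_pos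
  have hexA : ∀ v, PhyloNetwork.vertexOf A v → ∃ p, IsPath A N.root v p := by
    rintro v ⟨e, heA, hev⟩
    obtain ⟨q, hq⟩ := hexF e.1
    have heF : e ∈ F := hAF heA
    have hqe : IsPath F N.root e.2 (q ++ [e]) := isPath_concat_iff.2 ⟨hq, heF, rfl⟩
    have hall : ∀ f ∈ q ++ [e], f ∈ A := key e heA _ hqe
    rcases hev with rfl | rfl
    · exact ⟨q, isPath_restrict hq fun f hf => hall f (List.mem_append_left _ hf)⟩
    · exact ⟨q ++ [e], isPath_restrict hqe hall⟩
  have harb : N.IsArbor A := by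
    refine ⟨hAE, fun v hv => ?_⟩
    obtain ⟨p₀, hp₀⟩ := hexA v hv
    have : allPaths A N.root v = {p₀} := by
      apply Finset.eq_singleton_iff_unique_mem.2
      refine ⟨mem_allPaths.2 ⟨hp₀, isPath_length_le hacA hp₀⟩, fun q hq => ?_⟩
      exact path_unique hacA hdegA q.length le_rfl (mem_allPaths.1 hq).1 hp₀
    rw [this, Finset.card_singleton]
  have hspan : N.spans A S := by
    intro x hxS
    have hxr : N.leafOf x ≠ N.root := by
      intro h
      have h0 : outDeg N.E (N.leafOf x) = 0 := (N.leaf_iff _).2 ⟨x, rfl⟩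
      rw [h, N.root_out] at h0
      exact two_ne_zero h0
    have : 0 < (F.filter fun e => e.2 = N.leafOf x).card := (hFdeg _ hxr) ▸ Nat.one_pos
    obtain ⟨e, he⟩ := Finset.card_pos.1 this
    obtain ⟨heF, he2⟩ := Finset.mem_filter.1 he
    have heA : e ∈ A := by
      refine Finset.mem_filter.2 ⟨heF, x, Finset.mem_inter.2 ⟨?_, hxS⟩⟩
      exact Finset.mem_filter.2 ⟨Finset.mem_univ x, [], he2⟩
    exact ⟨e, heA, Or.inr he2⟩
  have hmem : N.weight A ∈ {w : ℝ | ∃ A', N.IsArbor A' ∧ N.spans A' S ∧ w = N.weight A'} :=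
    ⟨A, harb, hspan, rfl⟩
  have hbdd : BddBelow {w : ℝ | ∃ A', N.IsArbor A' ∧ N.spans A' S ∧ w = N.weight A'} := by
    refine ⟨0, ?_⟩
    rintro w ⟨A', hA', -, rfl⟩
    exact Finset.sum_nonneg fun e he => N.len_nonneg e (hA'.1 he)
  calc N.PND S ≤ N.weight A := csInf_le hbdd hmem
    _ = N.PDdisp F S := rfl
end

section
/- For a rooted phylogenetic tree T on X with positive edge lengths, the original Shapley Value of each taxon equals its Fair Proportion Index: SV_T(a) = FP_T(a) for all a ∈ X. -/
open Finset
open scoped Classical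

/-- A rooted phylogenetic `X`-tree with positive edge lengths, encoded by its set of
edge clusters: each edge of the tree corresponds to the nonempty set of leaves below it
(the clusters form a laminar family containing all singletons), and carries a length. -/
structure RPhyloTree (X : Type*) [Fintype X] [DecidableEq X] where
  clusters : Finset (Finset X)
  len : Finset X → ℝ
  cluster_nonempty : ∀ C ∈ clusters, C.Nonempty
  laminar : ∀ C ∈ clusters, ∀ D ∈ clusters, C ⊆ D ∨ D ⊆ C ∨ Disjoint C D
  singleton_mem : ∀ a : X, {a} ∈ clusters
  len_pos : ∀ C ∈ clusters, 0 < len C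

namespace RPhyloTree

variable {X : Type*} [Fintype X] [DecidableEq X] (T : RPhyloTree X)

/-- Phylogenetic diversity of `S`: the total length of the minimal subtree spanning `S`
and the root, i.e. the sum of the lengths of all edges having a leaf of `S` below them. -/
noncomputable def PD (S : Finset X) : ℝ :=
  ∑ C ∈ T.clusters.filter (fun C => (C ∩ S).Nonempty), T.len C

/-- Fair Proportion Index of the taxon `a`: the sum, over the edges on the root-to-`a`
path (i.e. the edges whose cluster contains `a`), of the edge length divided by the
number of leaves below the edge. -/
noncomputable def FP (a : X) : ℝ :=
  ∑ C ∈ T.clusters.filter (fun C => a ∈ C), T.len C / C.card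

end RPhyloTree

lemma hockey (k : ℕ) : ∀ m : ℕ, ∑ i ∈ Finset.range (m+1), (k+i).choose k = (k+m+1).choose (k+1) := by
  intro m
  induction m with
  | zero => simp
  | succ m ih =>
    rw [Finset.sum_range_succ, ih, show k + (m+1) = k + m + 1 by omega]
    have hp := Nat.choose_succ_succ (k+m+1) k
    simp only [Nat.succ_eq_add_one] at hp
    omega

lemma key_nat (c m : ℕ) (hc : 1 ≤ c) :
    c * ∑ j ∈ Finset.range (m+1), m.choose j * (Nat.factorial j * Nat.factorial (c + m - 1 - j))
      = Nat.factorial (c + m) := by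
  have h1 : ∀ j ∈ Finset.range (m+1),
      m.choose j * (Nat.factorial j * Nat.factorial (c + m - 1 - j))
      = (Nat.factorial m * Nat.factorial (c-1)) * ((c - 1 + (m - j)).choose (m - j)) := by
    intro j hj
    have hjm : j ≤ m := Nat.lt_succ_iff.mp (Finset.mem_range.mp hj)
    have e1 : c + m - 1 - j = c - 1 + (m - j) := by omega
    rw [e1]
    have h2 : (c - 1 + (m - j)).choose (m - j) * Nat.factorial (m - j) * Nat.factorial (c-1)
        = Nat.factorial (c - 1 + (m - j)) := by
      have := Nat.choose_mul_factorial_mul_factorial (Nat.le_add_left (m-j) (c-1))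
      simpa [Nat.add_sub_cancel] using this
    have h3 : m.choose j * Nat.factorial j * Nat.factorial (m - j) = Nat.factorial m :=
      Nat.choose_mul_factorial_mul_factorial hjm
    rw [← h2, ← h3]
    ring
  rw [Finset.sum_congr rfl h1, ← Finset.mul_sum]
  have h4 : ∑ j ∈ Finset.range (m+1), (c - 1 + (m - j)).choose (m - j)
      = ∑ j ∈ Finset.range (m+1), (c - 1 + j).choose j := by
    have := Finset.sum_range_reflect (fun j => (c - 1 + j).choose j) (m+1)
    simpa using this
  have h5 : ∀ j : ℕ, (c - 1 + j).choose j = (c - 1 + j).choose (c-1) := by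
    intro j
    rw [← Nat.choose_symm (Nat.le_add_right _ _), Nat.add_sub_cancel_left]
  rw [h4, Finset.sum_congr rfl (fun j _ => h5 j), hockey (c-1) m]
  have e2 : c - 1 + m + 1 = c + m := by omega
  have e3 : c - 1 + 1 = c := by omega
  rw [e2, e3]
  have h6 : (c+m).choose c * Nat.factorial c * Nat.factorial m = Nat.factorial (c+m) := by
    have := Nat.choose_mul_factorial_mul_factorial (Nat.le_add_right c m)
    simpa [Nat.add_sub_cancel_left] using this
  have h7 : c * Nat.factorial (c - 1) = Nat.factorial c := by
    have := Nat.mul_factorial_pred (show c ≠ 0 by omega)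
    simpa using this
  calc c * (Nat.factorial m * Nat.factorial (c-1) * (c+m).choose c)
      = (c * Nat.factorial (c-1)) * Nat.factorial m * (c+m).choose c := by ring
    _ = Nat.factorial c * Nat.factorial m * (c+m).choose c := by rw [h7]
    _ = Nat.factorial (c+m) := by rw [← h6]; ring

/-- on a rooted phylogenetic tree, the original Shapley Value of each
taxon equals its Fair Proportion Index. -/
theorem shapley_eq_FP {X : Type*} [Fintype X] [DecidableEq X]
    (T : RPhyloTree X) (a : X) :
    shapley T.PD a = T.FP a := by
  classical
  set n := Fintype.card X with hn
  set A := Finset.univ.powerset.filter (fun S : Finset X => a ∈ S) with hA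
  -- Step A: marginal contribution
  have hmarg : ∀ S : Finset X, a ∈ S →
      T.PD S - T.PD (S.erase a) = ∑ C ∈ T.clusters.filter (fun C => C ∩ S = {a}), T.len C := by
    intro S haS
    have hsub : T.clusters.filter (fun C => (C ∩ S.erase a).Nonempty)
        ⊆ T.clusters.filter (fun C => (C ∩ S).Nonempty) := by
      intro C hC
      simp only [Finset.mem_filter] at *
      exact ⟨hC.1, hC.2.mono (Finset.inter_subset_inter (Finset.Subset.refl C) (Finset.erase_subset _ _))⟩
    have hdiff : T.clusters.filter (fun C => (C ∩ S).Nonempty)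
          \ T.clusters.filter (fun C => (C ∩ S.erase a).Nonempty)
        = T.clusters.filter (fun C => C ∩ S = {a}) := by
      ext C
      simp only [Finset.mem_sdiff, Finset.mem_filter, not_and]
      constructor
      · rintro ⟨⟨h1, h2⟩, h3⟩
        have hne : ¬ (C ∩ S.erase a).Nonempty := h3 h1
        refine ⟨h1, ?_⟩
        apply Finset.Subset.antisymm
        · intro x hx
          simp only [Finset.mem_inter] at hx
          rw [Finset.mem_singleton]
          by_contra hxa
          exact hne ⟨x, Finset.mem_inter.mpr ⟨hx.1, Finset.mem_erase.mpr ⟨hxa, hx.2⟩⟩⟩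
        · intro x hx
          rw [Finset.mem_singleton] at hx
          obtain ⟨y, hy⟩ := h2
          simp only [Finset.mem_inter] at hy
          have hya : y = a := by
            by_contra hya
            exact hne ⟨y, Finset.mem_inter.mpr ⟨hy.1, Finset.mem_erase.mpr ⟨hya, hy.2⟩⟩⟩
          rw [hx]
          exact Finset.mem_inter.mpr ⟨hya ▸ hy.1, haS⟩
      · rintro ⟨h1, h2⟩
        refine ⟨⟨h1, by rw [h2]; exact ⟨a, Finset.mem_singleton_self a⟩⟩, fun _ => ?_⟩
        rintro ⟨x, hx⟩
        simp only [Finset.mem_inter, Finset.mem_erase] at hx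
        have hxm : x ∈ C ∩ S := Finset.mem_inter.mpr ⟨hx.1, hx.2.2⟩
        rw [h2, Finset.mem_singleton] at hxm
        exact hx.2.1 hxm
    rw [RPhyloTree.PD, RPhyloTree.PD, ← Finset.sum_sdiff_eq_sub hsub, hdiff]
  -- Step C: the weight of each cluster containing a
  have hW : ∀ C : Finset X, a ∈ C →
      ∑ S ∈ A.filter (fun S => C ∩ S = {a}),
        (((S.card - 1).factorial : ℝ) * ((n - S.card).factorial : ℝ))
      = (n.factorial : ℝ) / C.card := by
    intro C haC
    set m : ℕ := n - C.card with hm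
    have hCn : C.card ≤ n := by
      simpa [hn] using Finset.card_le_card (Finset.subset_univ C)
    have hc1 : 1 ≤ C.card := Finset.card_pos.mpr ⟨a, haC⟩
    have hmcard : (Finset.univ \ C).card = m := by
      rw [Finset.card_sdiff_of_subset (Finset.subset_univ C)]; rfl
    -- bijection S ↦ S.erase a
    have hbij : ∑ S ∈ A.filter (fun S => C ∩ S = {a}),
          (((S.card - 1).factorial : ℝ) * ((n - S.card).factorial : ℝ))
        = ∑ R ∈ (Finset.univ \ C).powerset,
          ((R.card.factorial : ℝ) * ((n - (R.card + 1)).factorial : ℝ)) := by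
      apply Finset.sum_nbij' (fun S => S.erase a) (fun R => insert a R)
      · intro S hS
        simp only [hA, Finset.mem_filter, Finset.mem_powerset] at hS
        obtain ⟨⟨-, haS⟩, hCS⟩ := hS
        rw [Finset.mem_powerset]
        intro x hx
        rw [Finset.mem_erase] at hx
        rw [Finset.mem_sdiff]
        refine ⟨Finset.mem_univ x, fun hxC => hx.1 ?_⟩
        have : x ∈ C ∩ S := Finset.mem_inter.mpr ⟨hxC, hx.2⟩
        rw [hCS, Finset.mem_singleton] at this
        exact this
      · intro R hR
        rw [Finset.mem_powerset] at hR
        have haR : a ∉ R := fun h => by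
          have := hR h; rw [Finset.mem_sdiff] at this; exact this.2 haC
        simp only [hA, Finset.mem_filter, Finset.mem_powerset]
        refine ⟨⟨Finset.subset_univ _, Finset.mem_insert_self a R⟩, ?_⟩
        apply Finset.Subset.antisymm
        · intro x hx
          simp only [Finset.mem_inter, Finset.mem_insert] at hx
          rcases hx.2 with h | h
          · simpa using h
          · exact (((Finset.mem_sdiff.mp (hR h)).2) hx.1).elim
        · intro x hx
          rw [Finset.mem_singleton] at hx
          rw [hx]
          exact Finset.mem_inter.mpr ⟨haC, Finset.mem_insert_self a R⟩
      · intro S hS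
        simp only [hA, Finset.mem_filter] at hS
        exact Finset.insert_erase hS.1.2
      · intro R hR
        rw [Finset.mem_powerset] at hR
        have haR : a ∉ R := fun h => by
          have := hR h; rw [Finset.mem_sdiff] at this; exact this.2 haC
        exact Finset.erase_insert haR
      · intro S hS
        simp only [hA, Finset.mem_filter] at hS
        have h1 : 1 ≤ S.card := Finset.card_pos.mpr ⟨a, hS.1.2⟩
        rw [Finset.card_erase_of_mem hS.1.2,
          show S.card - 1 + 1 = S.card from by omega]
    rw [hbij]
    have hgroup := Finset.sum_powerset_apply_card
      (fun j => ((j.factorial : ℝ) * ((n - (j + 1)).factorial : ℝ))) (x := Finset.univ \ C)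
    rw [hgroup, hmcard]
    -- now apply the nat identity
    have hkey := key_nat C.card m hc1
    have hcm : C.card + m = n := by omega
    rw [hcm] at hkey
    have hterm : ∀ j ∈ Finset.range (m+1),
        (m.choose j) • ((j.factorial : ℝ) * ((n - (j + 1)).factorial : ℝ))
        = ((m.choose j * (j.factorial * (n - 1 - j).factorial) : ℕ) : ℝ) := by
      intro j hj
      have : n - (j+1) = n - 1 - j := by omega
      rw [this, nsmul_eq_mul]
      push_cast
      try ring
    rw [Finset.sum_congr rfl hterm, ← Nat.cast_sum]
    have hccast : (C.card : ℝ) ≠ 0 := by positivity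
    rw [eq_div_iff hccast, ← Nat.cast_mul]
    have hkey' : (∑ j ∈ Finset.range (m+1),
        m.choose j * (Nat.factorial j * Nat.factorial (n - 1 - j))) * C.card = n.factorial := by
      rw [mul_comm]; exact hkey
    exact_mod_cast hkey'
  -- Step B: assemble
  rw [shapley, RPhyloTree.FP, ← hn, ← hA]
  have hswap : ∑ S ∈ A, ((S.card - 1).factorial : ℝ) * ((n - S.card).factorial : ℝ)
        * (T.PD S - T.PD (S.erase a))
      = ∑ C ∈ T.clusters, (∑ S ∈ A.filter (fun S => C ∩ S = {a}),
          (((S.card - 1).factorial : ℝ) * ((n - S.card).factorial : ℝ))) * T.len C := by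
    calc ∑ S ∈ A, ((S.card - 1).factorial : ℝ) * ((n - S.card).factorial : ℝ)
            * (T.PD S - T.PD (S.erase a))
        = ∑ S ∈ A, ∑ C ∈ T.clusters, (if C ∩ S = {a} then
            ((S.card - 1).factorial : ℝ) * ((n - S.card).factorial : ℝ) * T.len C else 0) := by
          refine Finset.sum_congr rfl fun S hS => ?_
          rw [hmarg S (Finset.mem_filter.mp hS).2, Finset.mul_sum, Finset.sum_filter]
      _ = ∑ C ∈ T.clusters, ∑ S ∈ A, (if C ∩ S = {a} then
            ((S.card - 1).factorial : ℝ) * ((n - S.card).factorial : ℝ) * T.len C else 0) :=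
          Finset.sum_comm
      _ = ∑ C ∈ T.clusters, (∑ S ∈ A.filter (fun S => C ∩ S = {a}),
            (((S.card - 1).factorial : ℝ) * ((n - S.card).factorial : ℝ))) * T.len C := by
          refine Finset.sum_congr rfl fun C hC => ?_
          rw [Finset.sum_mul]
          exact (Finset.sum_filter _ _).symm
  rw [hswap]
  have hvan : ∑ C ∈ T.clusters, (∑ S ∈ A.filter (fun S => C ∩ S = {a}),
          (((S.card - 1).factorial : ℝ) * ((n - S.card).factorial : ℝ))) * T.len C
      = ∑ C ∈ T.clusters.filter (fun C => a ∈ C), (∑ S ∈ A.filter (fun S => C ∩ S = {a}),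
          (((S.card - 1).factorial : ℝ) * ((n - S.card).factorial : ℝ))) * T.len C := by
    symm
    apply Finset.sum_filter_of_ne
    intro C hC hne
    by_contra haC
    apply hne
    have : A.filter (fun S => C ∩ S = {a}) = ∅ := by
      rw [Finset.filter_eq_empty_iff]
      intro S hS hCS
      apply haC
      have : a ∈ C ∩ S := by rw [hCS]; exact Finset.mem_singleton_self a
      exact (Finset.mem_inter.mp this).1
    rw [this, Finset.sum_empty, zero_mul]
  rw [hvan]
  rw [Finset.sum_congr rfl (fun C hC => by
    rw [hW C (Finset.mem_filter.mp hC).2])]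
  rw [Finset.mul_sum]
  refine Finset.sum_congr rfl fun C hC => ?_
  have hfac : (n.factorial : ℝ) ≠ 0 := by positivity
  have hcc : (C.card : ℝ) ≠ 0 := by
    have h1 : 1 ≤ C.card := Finset.card_pos.mpr ⟨a, (Finset.mem_filter.mp hC).2⟩
    positivity
  field_simp
  try ring
end
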